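/- (The f=h reciprocity for balanced simplicial complexes.) Let Δ be a balanced simplicial complex of type a = (a_1, …, a_m) with flag h-numbers (h_b)_{b ≤ a}, and let d = |a|. Then the identity ∑_{b ≤ a} h_b (1+x)^b x^{a−b} = ∑_{F ∈ Δ} m_F x^{b(F)} holds in ℤ[x_1, …, x_m], where m_F = ∑_{G ∈ Δ, F ⊆ G} (−1)^{d−|G|} and (1+x)^c := ∏_j (1+x_j)^{c_j}. -/

import Mathlib

open Finset MvPolynomial

/-- A (finite, abstract) simplicial complex: a finite collection of finite subsets of `V`
containing the empty set and closed under taking subsets. -/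
def IsSimplicialComplex {V : Type*} [DecidableEq V] (Δ : Finset (Finset V)) : Prop :=
  ∅ ∈ Δ ∧ ∀ F ∈ Δ, ∀ G ⊆ F, G ∈ Δ

/-- `Δ` has dimension `d - 1`: every face has at most `d` elements and some face has
exactly `d` elements. -/
def HasDimension {V : Type*} [DecidableEq V] (Δ : Finset (Finset V)) (d : ℕ) : Prop :=
  (∀ F ∈ Δ, F.card ≤ d) ∧ ∃ F ∈ Δ, F.card = d

/-- `fnum Δ i` is the number of faces of `Δ` with exactly `i` elements, i.e. `f_{i-1}`. -/
def fnum {V : Type*} [DecidableEq V] (Δ : Finset (Finset V)) (i : ℕ) : ℕ :=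
  (Δ.filter fun F => F.card = i).card

/-- The multiplicity `m_F = ∑_{G ∈ Δ, F ⊆ G} (−1)^{d−|G|}` of a face `F` of a complex of
dimension `d − 1` (all faces `G` satisfy `|G| ≤ d`, so `d - G.card` is the usual subtraction). -/
def mult {V : Type*} [DecidableEq V] (Δ : Finset (Finset V)) (d : ℕ) (F : Finset V) : ℤ :=
  ∑ G ∈ Δ.filter (fun G => F ⊆ G), (-1 : ℤ) ^ (d - G.card)

/-- The reduced Euler characteristic `χ̃(Γ) = ∑_{G ∈ Γ} (−1)^{|G|−1}`; the exponent is
written `|G| + 1`, which has the same parity as `|G| − 1` (the empty face contributes `−1`). -/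
def chiTilde {V : Type*} [DecidableEq V] (Γ : Finset (Finset V)) : ℤ :=
  ∑ G ∈ Γ, (-1 : ℤ) ^ (G.card + 1)

/-- The link of a face `F` in `Δ`. -/
def link {V : Type*} [DecidableEq V] (Δ : Finset (Finset V)) (F : Finset V) :
    Finset (Finset V) :=
  Δ.filter fun G => G ∩ F = ∅ ∧ G ∪ F ∈ Δ

/-- `Δ` (of dimension `d − 1`) is reciprocal if `m_F ∈ {0, 1}` for every nonempty face. -/
def IsReciprocal {V : Type*} [DecidableEq V] (Δ : Finset (Finset V)) (d : ℕ) : Prop :=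
  ∀ F ∈ Δ, F ≠ ∅ → mult Δ d F = 0 ∨ mult Δ d F = 1

/-- `Δ` (of dimension `d − 1`) is semi-Eulerian if `m_F = 1` for every nonempty face. -/
def IsSemiEulerian {V : Type*} [DecidableEq V] (Δ : Finset (Finset V)) (d : ℕ) : Prop :=
  ∀ F ∈ Δ, F ≠ ∅ → mult Δ d F = 1

/-- `fint Δ d i` is the number of interior faces (nonempty faces with `m_F = 1`) of `Δ`
with exactly `i` elements, i.e. `f^int_{i-1}`. -/
def fint {V : Type*} [DecidableEq V] (Δ : Finset (Finset V)) (d : ℕ) (i : ℕ) : ℕ :=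
  (Δ.filter fun F => F.card = i ∧ F ≠ ∅ ∧ mult Δ d F = 1).card

/-- `bvec κ F j` is the number of vertices of `F` with color `j`. -/
def bvec {V : Type*} [DecidableEq V] {m : ℕ} (κ : V → Fin m) (F : Finset V) (j : Fin m) : ℕ :=
  (F.filter fun v => κ v = j).card

/-- `Δ` is balanced of type `a` with respect to the coloring `κ`: every face of `Δ` that is
maximal under inclusion has exactly `a j` vertices of color `j`, for each color `j`. -/
def IsBalanced {V : Type*} [DecidableEq V] {m : ℕ} (Δ : Finset (Finset V))
    (κ : V → Fin m) (a : Fin m → ℕ) : Prop :=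
  ∀ F ∈ Δ, (∀ G ∈ Δ, F ⊆ G → G = F) → ∀ j, bvec κ F j = a j


section AuxReciprocity

variable {V : Type*} [DecidableEq V] {m : ℕ}

lemma bvec_sum_aux (κ : V → Fin m) (F : Finset V) : ∑ j, bvec κ F j = F.card :=
  (Finset.card_eq_sum_card_fiberwise (fun v _ => Finset.mem_univ (κ v))).symm

lemma prod_pow_bvec_aux {S : Type*} [CommRing S] (κ : V → Fin m) (F : Finset V) (y : Fin m → S) :
    ∏ j, y j ^ bvec κ F j = ∏ v ∈ F, y (κ v) := by
  rw [← Finset.prod_fiberwise F κ (fun v => y (κ v))]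
  refine Finset.prod_congr rfl fun j _ => ?_
  rw [Finset.prod_congr rfl (fun v hv => by rw [(Finset.mem_filter.1 hv).2] :
        ∀ v ∈ F.filter fun v => κ v = j, y (κ v) = y j),
      Finset.prod_const]
  rfl

lemma stepL_aux {K : Type*} [Field K] {y : K} (hy : y ≠ 0) {b a : ℕ} (hba : b ≤ a) :
    ((1 + y)/y) ^ b * y ^ a = (1 + y) ^ b * y ^ (a - b) := by
  rw [pow_sub₀ y hy hba, div_pow]
  field_simp

lemma stepR_aux {K : Type*} [Field K] {y : K} (hy : y ≠ 0) {b a : ℕ} (hba : b ≤ a) :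
    ((1 + y)/y) ^ b * (1 - (1 + y)/y) ^ (a - b) * y ^ a = (-1 : K) ^ (a - b) * (1 + y) ^ b := by
  have h1 : 1 - (1 + y)/y = -1/y := by field_simp; ring
  have hya : y ^ a = y ^ b * y ^ (a - b) := by rw [← pow_add, Nat.add_sub_cancel' hba]
  rw [h1, hya, div_pow, div_pow]
  field_simp

lemma keyA_aux {S : Type*} [CommRing S] (Δ : Finset (Finset V)) (hΔ : IsSimplicialComplex Δ)
    (κ : V → Fin m) (d : ℕ) (y : Fin m → S) :
    ∑ F ∈ Δ, (mult Δ d F : S) * ∏ j, y j ^ bvec κ F j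
      = ∑ G ∈ Δ, (-1 : S) ^ (d - G.card) * ∏ j, (1 + y j) ^ bvec κ G j := by
  have lhs_eq : ∀ F ∈ Δ, (mult Δ d F : S) * ∏ j, y j ^ bvec κ F j
      = ∑ G ∈ Δ.filter (fun G => F ⊆ G), (-1 : S) ^ (d - G.card) * ∏ v ∈ F, y (κ v) := by
    intro F _
    rw [prod_pow_bvec_aux, mult]
    push_cast
    rw [Finset.sum_mul]
  rw [Finset.sum_congr rfl lhs_eq]
  rw [Finset.sum_comm' (s' := fun G => Δ.filter (fun F => F ⊆ G))
    (t' := Δ) (fun F G => by simp only [Finset.mem_filter]; tauto)]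
  refine Finset.sum_congr rfl fun G hG => ?_
  have hpow : Δ.filter (fun F => F ⊆ G) = G.powerset := by
    ext F
    simp only [Finset.mem_filter, Finset.mem_powerset]
    exact ⟨fun h => h.2, fun h => ⟨hΔ.2 G hG F h, h⟩⟩
  rw [hpow, ← Finset.mul_sum]
  congr 1
  rw [prod_pow_bvec_aux]
  have := Finset.prod_add (fun v : V => y (κ v)) (fun _ => (1 : S)) G
  simp only [Finset.prod_const_one, mul_one] at this
  rw [Finset.prod_congr rfl fun v _ => (add_comm (1 : S) (y (κ v))), this]

lemma bvec_le_aux (Δ : Finset (Finset V)) (κ : V → Fin m) (a : Fin m → ℕ)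
    (hΔ : IsSimplicialComplex Δ) (hbal : IsBalanced Δ κ a) :
    ∀ F ∈ Δ, ∀ j, bvec κ F j ≤ a j := by
  intro F hF j
  obtain ⟨G, hG, hmax⟩ := Finset.exists_max_image (Δ.filter fun G => F ⊆ G)
    Finset.card ⟨F, Finset.mem_filter.2 ⟨hF, Finset.Subset.refl F⟩⟩
  rw [Finset.mem_filter] at hG
  have hGmax : ∀ G' ∈ Δ, G ⊆ G' → G' = G := fun G' hG' hsub =>
    (Finset.eq_of_subset_of_card_le hsub
      (hmax G' (Finset.mem_filter.2 ⟨hG', hG.2.trans hsub⟩))).symm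
  rw [← hbal G hG.1 hGmax j]
  exact Finset.card_le_card (Finset.filter_subset_filter _ hG.2)

end AuxReciprocity

/-- The f = h reciprocity for balanced simplicial complexes:
`∑_{b ≤ a} h_b (1+x)^b x^{a−b} = ∑_{F ∈ Δ} m_F x^{b(F)}` in `ℤ[x_1,…,x_m]`. -/
theorem flag_fh_reciprocity {V : Type*} [DecidableEq V] (Δ : Finset (Finset V)) {m : ℕ}
    (hm : 1 ≤ m) (κ : V → Fin m) (a : Fin m → ℕ) (d : ℕ) (hd : d = ∑ j, a j) (hd1 : 1 ≤ d)
    (hΔ : IsSimplicialComplex Δ) (hbal : IsBalanced Δ κ a)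
    (h : (Fin m → ℕ) → ℤ)
    (hh : (∑ b ∈ Finset.Iic a, C (h b) * ∏ j, X j ^ b j : MvPolynomial (Fin m) ℤ)
        = ∑ F ∈ Δ, (∏ j, X j ^ bvec κ F j) * ∏ j, (1 - X j) ^ (a j - bvec κ F j)) :
    (∑ b ∈ Finset.Iic a, C (h b) * (∏ j, (1 + X j) ^ b j) * ∏ j, X j ^ (a j - b j)
        : MvPolynomial (Fin m) ℤ)
      = ∑ F ∈ Δ, C (mult Δ d F) * ∏ j, X j ^ bvec κ F j := by
    classical
  have hble : ∀ F ∈ Δ, ∀ j, bvec κ F j ≤ a j := bvec_le_aux Δ κ a hΔ hbal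
  let R := MvPolynomial (Fin m) ℤ
  let K := FractionRing R
  let i : R →+* K := algebraMap R K
  have hinj : Function.Injective i := IsFractionRing.injective R K
  apply hinj
  let y : Fin m → K := fun j => i (X j)
  have hy0 : ∀ j, y j ≠ 0 := fun j hj =>
    MvPolynomial.X_ne_zero j (hinj (hj.trans (map_zero i).symm))
  let φ : R →+* K := eval₂Hom (Int.castRingHom K) (fun j => (1 + y j) / y j)
  have hiC : ∀ z : ℤ, i (C z) = (z : K) := fun z => by
    simpa using eq_intCast (i.comp (C : ℤ →+* R)) z
  have hφC : ∀ z : ℤ, φ (C z) = (z : K) := fun z => by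
    simp [φ, eval₂Hom_C]
  have hφX : ∀ j, φ (X j) = (1 + y j) / y j := fun j => eval₂Hom_X' _ _ j
  calc i (∑ b ∈ Finset.Iic a, C (h b) * (∏ j, (1 + X j) ^ b j) * ∏ j, X j ^ (a j - b j))
      = ∑ b ∈ Finset.Iic a, φ (C (h b) * ∏ j, X j ^ b j) * ∏ j, y j ^ a j := by
        rw [map_sum]
        refine Finset.sum_congr rfl fun b hb => ?_
        have hba : ∀ j, b j ≤ a j := by simpa [Pi.le_def] using Finset.mem_Iic.1 hb
        rw [map_mul, map_mul, map_prod, map_prod, map_mul, map_prod]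
        simp only [map_pow, map_add, map_one, hiC, hφC, hφX]
        rw [mul_assoc, mul_assoc, ← Finset.prod_mul_distrib, ← Finset.prod_mul_distrib]
        congr 1
        exact Finset.prod_congr rfl fun j _ => (stepL_aux (hy0 j) (hba j)).symm
    _ = (∑ b ∈ Finset.Iic a, φ (C (h b) * ∏ j, X j ^ b j)) * ∏ j, y j ^ a j :=
        (Finset.sum_mul _ _ _).symm
    _ = φ (∑ b ∈ Finset.Iic a, C (h b) * ∏ j, X j ^ b j) * ∏ j, y j ^ a j := by
        rw [map_sum]
    _ = φ (∑ F ∈ Δ, (∏ j, X j ^ bvec κ F j) * ∏ j, (1 - X j) ^ (a j - bvec κ F j))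
          * ∏ j, y j ^ a j := by rw [hh]
    _ = ∑ F ∈ Δ, (-1 : K) ^ (d - F.card) * ∏ j, (1 + y j) ^ bvec κ F j := by
        rw [map_sum, Finset.sum_mul]
        refine Finset.sum_congr rfl fun F hF => ?_
        have hsum : ∑ j, (a j - bvec κ F j) = d - F.card := by
          rw [Finset.sum_tsub_distrib _ (fun j _ => hble F hF j), ← bvec_sum_aux κ F, hd]
        rw [map_mul, map_prod, map_prod]
        simp only [map_pow, map_sub, map_one, hφX]
        rw [← Finset.prod_mul_distrib, ← Finset.prod_mul_distrib,
            Finset.prod_congr rfl (fun j _ => stepR_aux (hy0 j) (hble F hF j)),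
            Finset.prod_mul_distrib, Finset.prod_pow_eq_pow_sum, hsum]
    _ = ∑ F ∈ Δ, (mult Δ d F : K) * ∏ j, y j ^ bvec κ F j := (keyA_aux Δ hΔ κ d y).symm
    _ = i (∑ F ∈ Δ, C (mult Δ d F) * ∏ j, X j ^ bvec κ F j) := by
        rw [map_sum]
        refine Finset.sum_congr rfl fun F _ => ?_
        rw [map_mul, map_prod]
        simp only [map_pow, hiC]
        rfl
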